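/- Let K be a finite field with q elements and let d ≥ 2 be an integer. Then the number of monic irreducible polynomials of degree d in K[x] is at least q^d/d − (q/(d(q−1)))·(q^{d/2} − 1), where q^{d/2} denotes the real number q raised to the power d/2. -/

import Mathlib

open Polynomial Finset IntermediateField

section Aux

variable {K : Type*} [Field K] [Fintype K]

/-- Main combinatorial bound in ℕ. -/
theorem nat_count_bound (d : ℕ) (hd : 2 ≤ d) :
    Fintype.card K ^ d ≤
      d * Nat.card {f : Polynomial K // f.Monic ∧ f.natDegree = d ∧ Irreducible f}
        + ∑ e ∈ Finset.Icc 1 (d / 2), Fintype.card K ^ e := by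
  classical
  set q := Fintype.card K with hq
  have hq2 : 2 ≤ q := Fintype.one_lt_card
  have hd0 : d ≠ 0 := by omega
  obtain ⟨p, hp⟩ := CharP.exists K
  haveI := hp
  have hp' : p.Prime := CharP.char_is_prime K p
  haveI : Fact p.Prime := ⟨hp'⟩
  obtain ⟨m, -, hm⟩ := FiniteField.card K p
  rw [← hq] at hm
  set g : K[X] := X ^ q ^ d - X with hg
  set L := g.SplittingField with hL
  haveI : Finite L := Module.finite_of_finite K
  haveI : Fintype L := Fintype.ofFinite L
  haveI : CharP L p := charP_of_injective_algebraMap (algebraMap K L).injective p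
  have hpq : p ∣ q ^ d := dvd_trans (hm ▸ dvd_pow_self p m.pos.ne') (dvd_pow_self q hd0)
  have hsep : g.Separable := galois_poly_separable p (q ^ d) hpq
  have hgne : g ≠ 0 := FiniteField.X_pow_card_pow_sub_X_ne_zero K hd0 (by omega)
  -- every element of L satisfies x ^ q ^ d = x
  have key : ∀ x : L, x ^ q ^ d = x := by
    have hqd : q ^ d = p ^ (m * d) := by rw [hm, ← pow_mul]
    let ψ : L →ₐ[K] L :=
      { toRingHom := iterateFrobenius L p (m * d)
        commutes' := fun a => by
          show iterateFrobenius L p (m * d) (algebraMap K L a) = algebraMap K L a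
          rw [iterateFrobenius_def, ← map_pow, ← hqd, FiniteField.pow_card_pow] }
    have htop : AlgHom.equalizer ψ (AlgHom.id K L) = ⊤ := by
      rw [eq_top_iff, ← SplittingField.adjoin_rootSet g]
      apply Algebra.adjoin_le
      intro x hx
      rw [mem_rootSet_of_ne hgne] at hx
      have hx' : x ^ q ^ d = x := by
        have := hx
        simp only [hg, map_sub, map_pow, aeval_X, sub_eq_zero] at this
        exact this
      show ψ x = x
      show iterateFrobenius L p (m * d) x = x
      rw [iterateFrobenius_def, ← hqd, hx']
    intro x
    have hx : x ∈ AlgHom.equalizer ψ (AlgHom.id K L) := htop ▸ Algebra.mem_top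
    have : iterateFrobenius L p (m * d) x = x := hx
    rw [iterateFrobenius_def, ← hqd] at this
    exact this
  -- card L = q ^ d
  have hcard : Fintype.card L = q ^ d := by
    have h1 : Fintype.card (g.rootSet L) = g.natDegree :=
      card_rootSet_eq_natDegree hsep (SplittingField.splits g)
    have hdeg : g.natDegree = q ^ d :=
      FiniteField.X_pow_card_pow_sub_X_natDegree_eq K hd0 (by omega)
    have h2 : g.rootSet L = Set.univ := by
      ext x
      rw [mem_rootSet_of_ne hgne]
      simp only [Set.mem_univ, iff_true, mem_rootSet_of_ne hgne, hg, map_sub, map_pow,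
        aeval_X, sub_eq_zero, key x]
    have h3 : Fintype.card (g.rootSet L) = Fintype.card L :=
      Fintype.card_congr ((Equiv.setCongr h2).trans (Equiv.Set.univ L))
    rw [← h3, h1, hdeg]
  have hfin : Module.finrank K L = d := by
    have h := Module.card_eq_pow_finrank (K := K) (V := L)
    rw [hcard] at h
    exact (Nat.pow_right_injective hq2 h).symm
  -- minpoly facts
  have hdegfin : ∀ x : L, (minpoly K x).natDegree = Module.finrank K K⟮x⟯ := fun x =>
    (IntermediateField.adjoin.finrank (IsIntegral.of_finite K x)).symm
  have hdvd : ∀ x : L, (minpoly K x).natDegree ∣ d := fun x => by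
    rw [hdegfin x, ← hfin]
    exact ⟨Module.finrank K⟮x⟯ L, (Module.finrank_mul_finrank K K⟮x⟯ L).symm⟩
  have hpow : ∀ x : L, x ^ q ^ (minpoly K x).natDegree = x := fun x => by
    haveI : Finite K⟮x⟯ := Module.finite_of_finite K
    haveI : Fintype K⟮x⟯ := Fintype.ofFinite _
    have hcard' : Fintype.card K⟮x⟯ = q ^ (minpoly K x).natDegree := by
      rw [Module.card_eq_pow_finrank (K := K), hdegfin x]
    have h := FiniteField.pow_card (IntermediateField.AdjoinSimple.gen K x)
    rw [hcard'] at h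
    have h2 := congrArg (algebraMap K⟮x⟯ L) h
    simpa only [map_pow, IntermediateField.AdjoinSimple.algebraMap_gen] using h2
  -- finiteness of the subtype of irreducible monic polys of degree d
  haveI hfinsub : Finite {f : K[X] // f.Monic ∧ f.natDegree = d ∧ Irreducible f} := by
    apply Finite.of_injective
      (fun f : {f : K[X] // f.Monic ∧ f.natDegree = d ∧ Irreducible f} =>
        (fun i => (f : K[X]).coeff i : Fin (d + 1) → K))
    rintro ⟨f, hf⟩ ⟨f', hf'⟩ h
    ext n
    rcases le_or_gt n d with hn | hn
    · have := congrFun h ⟨n, by omega⟩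
      simpa using this
    · rw [coeff_eq_zero_of_natDegree_lt (by omega : f.natDegree < n) ,
        coeff_eq_zero_of_natDegree_lt (by omega : f'.natDegree < n)]
  set N := Nat.card {f : K[X] // f.Monic ∧ f.natDegree = d ∧ Irreducible f} with hN
  set s : Finset L := univ.filter (fun x => (minpoly K x).natDegree = d) with hs
  set t : Finset L := univ.filter (fun x => ¬ (minpoly K x).natDegree = d) with ht
  have hst : s.card + t.card = q ^ d := by
    rw [hs, ht, Finset.card_filter_add_card_filter_not, Finset.card_univ, hcard]
  -- bound on s
  have hsbound : s.card ≤ d * N := by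
    have h1 : s.card ≤ d * (s.image (fun x => minpoly K x)).card := by
      apply Finset.card_le_mul_card_image
      intro f hf
      obtain ⟨x₀, hx₀, rfl⟩ := Finset.mem_image.mp hf
      have hx₀d : (minpoly K x₀).natDegree = d := (Finset.mem_filter.mp hx₀).2
      have hsub : (s.filter fun x => minpoly K x = minpoly K x₀) ⊆
          ((minpoly K x₀).aroots L).toFinset := by
        intro y hy
        obtain ⟨-, hy2⟩ := Finset.mem_filter.mp hy
        rw [Multiset.mem_toFinset, mem_aroots]
        exact ⟨minpoly.ne_zero (IsIntegral.of_finite K x₀),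
          by rw [← hy2]; exact minpoly.aeval K y⟩
      calc (s.filter fun x => minpoly K x = minpoly K x₀).card
          ≤ ((minpoly K x₀).aroots L).toFinset.card := Finset.card_le_card hsub
        _ ≤ Multiset.card ((minpoly K x₀).aroots L) := Multiset.toFinset_card_le _
        _ ≤ ((minpoly K x₀).map (algebraMap K L)).natDegree := card_roots' _
        _ = (minpoly K x₀).natDegree := natDegree_map _
        _ = d := hx₀d
    have h2 : (s.image (fun x => minpoly K x)).card ≤ N := by
      rw [hN, ← Nat.card_eq_finsetCard]
      apply Nat.card_le_card_of_injective
        (fun f : {f // f ∈ s.image (fun x => minpoly K x)} =>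
          (⟨f.1, by
            obtain ⟨x, hx, hfx⟩ := Finset.mem_image.mp f.2
            have hint : IsIntegral K x := IsIntegral.of_finite K x
            refine ⟨?_, ?_, ?_⟩
            · rw [← hfx]; exact minpoly.monic hint
            · rw [← hfx]; exact (Finset.mem_filter.mp hx).2
            · rw [← hfx]; exact minpoly.irreducible hint⟩ :
            {f : K[X] // f.Monic ∧ f.natDegree = d ∧ Irreducible f}))
      intro a b hab
      have h' := congrArg
        (Subtype.val (p := fun f : K[X] => f.Monic ∧ f.natDegree = d ∧ Irreducible f)) hab
      exact Subtype.ext h'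
    calc s.card ≤ d * (s.image (fun x => minpoly K x)).card := h1
      _ ≤ d * N := Nat.mul_le_mul_left d h2
  -- bound on t
  have htbound : t.card ≤ ∑ e ∈ Finset.Icc 1 (d / 2), q ^ e := by
    have hsub : t ⊆ (Finset.Icc 1 (d / 2)).biUnion
        (fun e => univ.filter (fun x : L => x ^ q ^ e = x)) := by
      intro x hx
      have hxd : (minpoly K x).natDegree ≠ d := (Finset.mem_filter.mp hx).2
      set e := (minpoly K x).natDegree with he
      have he1 : 1 ≤ e := minpoly.natDegree_pos (IsIntegral.of_finite K x)
      have hed : e ∣ d := hdvd x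
      have hele : e ≤ d / 2 := by
        obtain ⟨k, hk⟩ := hed
        have hk2 : 2 ≤ k := by
          rcases Nat.lt_or_ge k 2 with h | h
          · interval_cases k <;> omega
          · exact h
        have : 2 * e ≤ d := by
          calc 2 * e ≤ k * e := Nat.mul_le_mul_right e hk2
            _ = d := by rw [hk]; ring
        omega
      refine Finset.mem_biUnion.mpr ⟨e, Finset.mem_Icc.mpr ⟨he1, hele⟩, ?_⟩
      exact Finset.mem_filter.mpr ⟨Finset.mem_univ x, hpow x⟩
    calc t.card ≤ _ := Finset.card_le_card hsub
      _ ≤ ∑ e ∈ Finset.Icc 1 (d / 2), (univ.filter (fun x : L => x ^ q ^ e = x)).card :=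
          Finset.card_biUnion_le
      _ ≤ ∑ e ∈ Finset.Icc 1 (d / 2), q ^ e := by
          apply Finset.sum_le_sum
          intro e he
          have he1 : 1 ≤ e := (Finset.mem_Icc.mp he).1
          have hqe : 1 < q ^ e := Nat.one_lt_pow (by omega) hq2
          have hne : (X ^ q ^ e - X : L[X]) ≠ 0 :=
            FiniteField.X_pow_card_sub_X_ne_zero L hqe
          have hsub2 : (univ.filter (fun x : L => x ^ q ^ e = x)) ⊆
              ((X ^ q ^ e - X : L[X]).roots).toFinset := by
            intro x hx
            have hx2 : x ^ q ^ e = x := (Finset.mem_filter.mp hx).2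
            rw [Multiset.mem_toFinset, mem_roots hne]
            simp [IsRoot, hx2]
          calc (univ.filter (fun x : L => x ^ q ^ e = x)).card
              ≤ ((X ^ q ^ e - X : L[X]).roots).toFinset.card := Finset.card_le_card hsub2
            _ ≤ Multiset.card ((X ^ q ^ e - X : L[X]).roots) := Multiset.toFinset_card_le _
            _ ≤ (X ^ q ^ e - X : L[X]).natDegree := card_roots' _
            _ = q ^ e := FiniteField.X_pow_card_sub_X_natDegree_eq L hqe
  omega

end Aux

/-- Over a finite field `K` with `q` elements, for `d ≥ 2`, the number of
monic irreducible polynomials of degree `d` in `K[x]` is at least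
`q^d/d − (q/(d(q−1)))·(q^{d/2} − 1)`. -/
theorem count_irreducible_ge
    (K : Type*) [Field K] [Fintype K] (q : ℕ) (hq : Fintype.card K = q)
    (d : ℕ) (hd : 2 ≤ d) :
    (q : ℝ) ^ d / d - ((q : ℝ) / (d * ((q : ℝ) - 1))) * ((q : ℝ) ^ ((d : ℝ) / 2) - 1)
      ≤ Nat.card {f : Polynomial K // f.Monic ∧ f.natDegree = d ∧ Irreducible f} := by
  have hbound := nat_count_bound (K := K) d hd
  rw [hq] at hbound
  set N := Nat.card {f : Polynomial K // f.Monic ∧ f.natDegree = d ∧ Irreducible f}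
  have hq2 : 2 ≤ q := hq ▸ Fintype.one_lt_card
  have hq1 : (1 : ℝ) < q := by exact_mod_cast hq2
  have hd0 : (0 : ℝ) < d := by positivity
  set h := d / 2 with hh
  -- real form of the combinatorial bound
  have main : (q : ℝ) ^ d ≤ d * N + ∑ e ∈ Finset.Icc 1 h, (q : ℝ) ^ e := by
    have := hbound
    push_cast
    exact_mod_cast this
  -- geometric sum identity
  have hgeom : (∑ e ∈ Finset.Icc 1 h, (q : ℝ) ^ e) * ((q : ℝ) - 1)
      = (q : ℝ) * ((q : ℝ) ^ h - 1) := by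
    have h1 : ∑ e ∈ Finset.Icc 1 h, (q : ℝ) ^ e
        = (q : ℝ) * ∑ i ∈ Finset.range h, (q : ℝ) ^ i := by
      rw [Finset.mul_sum]
      induction h with
      | zero => simp
      | succ n ih =>
          rw [Finset.sum_Icc_succ_top (by omega), ih, Finset.sum_range_succ]
          ring
    rw [h1, mul_assoc, geom_sum_mul]
  -- q ^ h ≤ q ^ (d/2 : ℝ)
  have hexp : (q : ℝ) ^ h ≤ (q : ℝ) ^ ((d : ℝ) / 2) := by
    rw [← Real.rpow_natCast (q : ℝ) h]
    apply Real.rpow_le_rpow_of_exponent_le (le_of_lt hq1)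
    have := Nat.cast_div_le (m := d) (n := 2) (α := ℝ)
    push_cast at this ⊢
    convert this using 2
  set S := ∑ e ∈ Finset.Icc 1 h, (q : ℝ) ^ e with hS
  have hSnn : 0 ≤ S := Finset.sum_nonneg fun e _ => by positivity
  have hq1' : (0 : ℝ) < (q : ℝ) - 1 := by linarith
  have hkey : S * ((q : ℝ) - 1) ≤ (q : ℝ) * ((q : ℝ) ^ ((d : ℝ) / 2) - 1) := by
    rw [hS, hgeom]
    nlinarith [hexp]
  -- conclude
  have h1 : ((q : ℝ) ^ d - S) / d ≤ N := by
    rw [div_le_iff₀ hd0]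
    nlinarith [main]
  refine le_trans ?_ h1
  rw [sub_div, sub_le_sub_iff_left, div_le_iff₀ hd0,
    show ((q : ℝ) / (d * ((q : ℝ) - 1))) * ((q : ℝ) ^ ((d : ℝ) / 2) - 1) * d
        = (q : ℝ) * ((q : ℝ) ^ ((d : ℝ) / 2) - 1) / ((q : ℝ) - 1) from by
      field_simp,
    le_div_iff₀ hq1']
  exact hkey
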